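/- Let F(v) = 2Φ(v) − 1 for v ≥ 0 and F(v) = 0 for v < 0 denote the CDF of the absolute value of a standard normal random variable. Let (Ω, P) be a probability space, ψ : Ω → [0,∞) integrable, and fix u > 0 and α = 1 − F(u). Suppose for each S > 0 a measurable function TPR_S : Ω → ℝ satisfies TPR_S(ω) ≤ 1 − F(u − ψ(ω)/√S) for all ω. Then limsup_{S→∞} √S·( ∫_Ω TPR_S dP − α ) ≤ √(2/π)·e^{−u²/2}·∫_Ω ψ dP. -/

import Mathlib

open MeasureTheory ProbabilityTheory Real Filter

/-- `Φ`, the CDF of the standard normal distribution. -/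
noncomputable def stdGaussianCDF (x : ℝ) : ℝ :=
  (gaussianReal 0 1 (Set.Iic x)).toReal

/-- CDF of the absolute value of a standard normal random variable:
`F(v) = 2Φ(v) − 1` for `v ≥ 0` and `F(v) = 0` for `v < 0`. -/
noncomputable def foldedStdGaussianCDF (v : ℝ) : ℝ :=
  if 0 ≤ v then 2 * stdGaussianCDF v - 1 else 0

lemma stdGaussianCDF_eq (x : ℝ) :
    stdGaussianCDF x = ∫ t in Set.Iic x, gaussianPDFReal 0 1 t := by
  rw [stdGaussianCDF, gaussianReal_apply_eq_integral _ one_ne_zero,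
    ENNReal.toReal_ofReal (setIntegral_nonneg measurableSet_Iic
      (fun t _ => gaussianPDFReal_nonneg 0 1 t))]

lemma stdGaussianCDF_diff {a b : ℝ} (hab : a ≤ b) :
    stdGaussianCDF b - stdGaussianCDF a = ∫ t in Set.Ioc a b, gaussianPDFReal 0 1 t := by
  rw [stdGaussianCDF_eq, stdGaussianCDF_eq]
  have h : Set.Iic b = Set.Iic a ∪ Set.Ioc a b := (Set.Iic_union_Ioc_eq_Iic hab).symm
  rw [h, setIntegral_union (Set.Iic_disjoint_Ioc le_rfl) measurableSet_Ioc
    ((integrable_gaussianPDFReal 0 1).integrableOn)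
    ((integrable_gaussianPDFReal 0 1).integrableOn)]
  ring

lemma stdGaussianCDF_diff_le {a b : ℝ} (ha : 0 ≤ a) (hab : a ≤ b) :
    stdGaussianCDF b - stdGaussianCDF a ≤ (b - a) * ((Real.sqrt (2 * π))⁻¹ * rexp (-a ^ 2 / 2)) := by
  rw [stdGaussianCDF_diff hab]
  have hbd : ∀ t ∈ Set.Ioc a b, gaussianPDFReal 0 1 t ≤ (Real.sqrt (2 * π))⁻¹ * rexp (-a ^ 2 / 2) := by
    intro t ht
    rw [gaussianPDFReal]
    simp only [NNReal.coe_one, mul_one, sub_zero]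
    gcongr
    exact ht.1.le
  calc ∫ t in Set.Ioc a b, gaussianPDFReal 0 1 t
      ≤ ∫ _ in Set.Ioc a b, (Real.sqrt (2 * π))⁻¹ * rexp (-a ^ 2 / 2) :=
        setIntegral_mono_on ((integrable_gaussianPDFReal 0 1).integrableOn)
          (integrableOn_const measure_Ioc_lt_top.ne enorm_ne_top)
          measurableSet_Ioc hbd
    _ = (b - a) * ((Real.sqrt (2 * π))⁻¹ * rexp (-a ^ 2 / 2)) := by
        rw [setIntegral_const]
        simp [Real.volume_Ioc, ENNReal.toReal_ofReal (sub_nonneg.2 hab)]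
        exact Or.inl hab

lemma stdGaussianCDF_zero : stdGaussianCDF 0 = 1 / 2 := by
  have heven : ∀ t : ℝ, gaussianPDFReal 0 1 (-t) = gaussianPDFReal 0 1 t := by
    intro t; simp [gaussianPDFReal, neg_sq]
  have h1 : ∫ t in Set.Iic (0:ℝ), gaussianPDFReal 0 1 t
      = ∫ t in Set.Ioi (0:ℝ), gaussianPDFReal 0 1 t := by
    have h := integral_comp_neg_Iic (0:ℝ) (gaussianPDFReal 0 1)
    simp_rw [heven, neg_zero] at h
    exact h
  have htot : (∫ t in Set.Iic (0:ℝ), gaussianPDFReal 0 1 t)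
      + ∫ t in Set.Ioi (0:ℝ), gaussianPDFReal 0 1 t = 1 := by
    rw [← integral_gaussianPDFReal_eq_one (0:ℝ) (v := 1) one_ne_zero,
      ← setIntegral_union (Set.Iic_disjoint_Ioi le_rfl) measurableSet_Ioi
        ((integrable_gaussianPDFReal 0 1).integrableOn)
        ((integrable_gaussianPDFReal 0 1).integrableOn),
      Set.Iic_union_Ioi, setIntegral_univ]
  rw [stdGaussianCDF_eq]
  linarith

lemma sqrt_two_div_pi : Real.sqrt (2 / π) = 2 * (Real.sqrt (2 * π))⁻¹ := by
  have hπ : (0:ℝ) < π := Real.pi_pos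
  have hs : (0:ℝ) < Real.sqrt (2 * π) := Real.sqrt_pos.2 (by positivity)
  have h : Real.sqrt (2 / π) * Real.sqrt (2 * π) = 2 := by
    rw [← Real.sqrt_mul (by positivity)]
    rw [show 2 / π * (2 * π) = 2 ^ 2 by field_simp]
    exact Real.sqrt_sq (by norm_num)
  rw [mul_comm, inv_mul_eq_div, eq_div_iff hs.ne']
  exact h

lemma folded_diff_le {u : ℝ} (hu : 0 < u) {t : ℝ} (ht : 0 ≤ t) :
    foldedStdGaussianCDF u - foldedStdGaussianCDF (u - t) ≤
      min (Real.sqrt (2 / π) * rexp (-u ^ 2 / 2) * (t * rexp (u * t)))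
        (Real.sqrt (2 / π) * t) := by
  have hπ : (0:ℝ) < π := Real.pi_pos
  have hs : (0:ℝ) < Real.sqrt (2 * π) := Real.sqrt_pos.2 (by positivity)
  rw [foldedStdGaussianCDF, if_pos hu.le, foldedStdGaussianCDF]
  by_cases hut : 0 ≤ u - t
  · rw [if_pos hut]
    have hd := stdGaussianCDF_diff_le hut (by linarith : u - t ≤ u)
    have key : 2 * stdGaussianCDF u - 1 - (2 * stdGaussianCDF (u - t) - 1)
        ≤ Real.sqrt (2 / π) * t * rexp (-(u - t) ^ 2 / 2) := by
      rw [sqrt_two_div_pi]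
      calc 2 * stdGaussianCDF u - 1 - (2 * stdGaussianCDF (u - t) - 1)
          = 2 * (stdGaussianCDF u - stdGaussianCDF (u - t)) := by ring
        _ ≤ 2 * ((u - (u - t)) * ((Real.sqrt (2 * π))⁻¹ * rexp (-(u - t) ^ 2 / 2))) := by
            linarith [hd]
        _ = 2 * (Real.sqrt (2 * π))⁻¹ * t * rexp (-(u - t) ^ 2 / 2) := by ring
    refine le_min ?_ ?_
    · refine key.trans ?_
      have : rexp (-(u - t) ^ 2 / 2) = rexp (-u ^ 2 / 2) * rexp (u * t) * rexp (-t ^ 2 / 2) := by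
        rw [← Real.exp_add, ← Real.exp_add]; ring_nf
      rw [this]
      have h1 : rexp (-t ^ 2 / 2) ≤ 1 := Real.exp_le_one_iff.2 (by nlinarith)
      have hnn : (0:ℝ) ≤ Real.sqrt (2 / π) * t * (rexp (-u ^ 2 / 2) * rexp (u * t)) :=
        mul_nonneg (mul_nonneg (Real.sqrt_nonneg _) ht) (by positivity)
      calc Real.sqrt (2 / π) * t * (rexp (-u ^ 2 / 2) * rexp (u * t) * rexp (-t ^ 2 / 2))
          = Real.sqrt (2 / π) * t * (rexp (-u ^ 2 / 2) * rexp (u * t)) * rexp (-t ^ 2 / 2) := by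
            ring
        _ ≤ Real.sqrt (2 / π) * t * (rexp (-u ^ 2 / 2) * rexp (u * t)) * 1 :=
            mul_le_mul_of_nonneg_left h1 hnn
        _ = Real.sqrt (2 / π) * rexp (-u ^ 2 / 2) * (t * rexp (u * t)) := by ring
    · refine key.trans ?_
      have h1 : rexp (-(u - t) ^ 2 / 2) ≤ 1 := Real.exp_le_one_iff.2 (by nlinarith)
      have hnn : (0:ℝ) ≤ Real.sqrt (2 / π) * t := mul_nonneg (Real.sqrt_nonneg _) ht
      calc Real.sqrt (2 / π) * t * rexp (-(u - t) ^ 2 / 2)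
          ≤ Real.sqrt (2 / π) * t * 1 := mul_le_mul_of_nonneg_left h1 hnn
        _ = Real.sqrt (2 / π) * t := by ring
  · rw [if_neg hut]
    have hd := stdGaussianCDF_diff_le (le_refl (0:ℝ)) hu.le
    have key : 2 * stdGaussianCDF u - 1 - 0 ≤ Real.sqrt (2 / π) * u := by
      rw [stdGaussianCDF_zero] at hd
      rw [sqrt_two_div_pi]
      have : -(0:ℝ) ^ 2 / 2 = 0 := by norm_num
      rw [this, Real.exp_zero] at hd
      nlinarith [hd]
    have htu : u < t := by linarith
    refine le_min ?_ ?_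
    · refine key.trans ?_
      have hc : rexp (-u ^ 2 / 2) * rexp (u * t) = rexp (u * t - u ^ 2 / 2) := by
        rw [← Real.exp_add]; ring_nf
      have h1 : (1:ℝ) ≤ rexp (u * t - u ^ 2 / 2) := Real.one_le_exp (by nlinarith)
      have := Real.sqrt_nonneg (2 / π)
      calc Real.sqrt (2 / π) * u ≤ Real.sqrt (2 / π) * t := by nlinarith
        _ = Real.sqrt (2 / π) * t * 1 := by ring
        _ ≤ Real.sqrt (2 / π) * t * rexp (u * t - u ^ 2 / 2) := by
            have : (0:ℝ) ≤ Real.sqrt (2 / π) * t := by positivity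
            nlinarith
        _ = Real.sqrt (2 / π) * rexp (-u ^ 2 / 2) * (t * rexp (u * t)) := by
            rw [← hc]; ring
    · refine key.trans ?_
      nlinarith [Real.sqrt_nonneg (2 / π)]

/-- Corollary 2 (average-case RMIA power-law), precise form: if for each `S > 0` the
measurable function `TPR_S` satisfies `TPR_S(ω) ≤ 1 − F(u − ψ(ω)/√S)` with `ψ ≥ 0`
integrable, `u > 0` and `α = 1 − F(u)`, then
`limsup_{S→∞} √S·(∫ TPR_S dP − α) ≤ √(2/π)·e^{−u²/2}·∫ ψ dP`. -/
theorem stmt_14 {Ω : Type*} [MeasurableSpace Ω] (P : Measure Ω) [IsProbabilityMeasure P]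
    (ψ : Ω → ℝ) (hψ : ∀ ω, 0 ≤ ψ ω) (hint : Integrable ψ P)
    (u α : ℝ) (hu : 0 < u) (hα : α = 1 - foldedStdGaussianCDF u)
    (TPR : ℝ → Ω → ℝ)
    (hmeas : ∀ S, Measurable (TPR S))
    (hTPRint : ∀ S, Integrable (TPR S) P)
    (hbound : ∀ S > (0 : ℝ), ∀ ω, TPR S ω ≤ 1 - foldedStdGaussianCDF (u - ψ ω / Real.sqrt S)) :
    Filter.limsup (fun S : ℝ => Real.sqrt S * ((∫ ω, TPR S ω ∂P) - α)) Filter.atTop ≤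
      Real.sqrt (2 / Real.pi) * Real.exp (-u ^ 2 / 2) * ∫ ω, ψ ω ∂P := by
  set K : ℝ := Real.sqrt (2 / π) * rexp (-u ^ 2 / 2) with hKdef
  set L : ℝ := Real.sqrt (2 / π) with hLdef
  have hK0 : 0 ≤ K := by positivity
  have hL0 : 0 ≤ L := Real.sqrt_nonneg _
  have hKL : K ≤ L := by
    have h1 : rexp (-u ^ 2 / 2) ≤ 1 := Real.exp_le_one_iff.2 (by nlinarith)
    calc K = L * rexp (-u ^ 2 / 2) := rfl
      _ ≤ L * 1 := mul_le_mul_of_nonneg_left h1 hL0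
      _ = L := by ring
  set h : ℝ → Ω → ℝ :=
    fun S ω => min (K * (ψ ω * rexp (u * ψ ω / Real.sqrt S))) (L * ψ ω) with hhdef
  have hh_nonneg : ∀ S ω, 0 ≤ h S ω := by
    intro S ω
    exact le_min (mul_nonneg hK0 (mul_nonneg (hψ ω) (Real.exp_nonneg _))) (mul_nonneg hL0 (hψ ω))
  have hh_le : ∀ S ω, h S ω ≤ L * ψ ω := fun S ω => min_le_right _ _
  have hh_meas : ∀ S, AEStronglyMeasurable (h S) P := by
    intro S
    have hc : Continuous (fun x : ℝ =>
        min (K * (x * rexp (u * x / Real.sqrt S))) (L * x)) := by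
      fun_prop
    exact hc.comp_aestronglyMeasurable hint.aestronglyMeasurable
  have hh_int : ∀ S, Integrable (h S) P := by
    intro S
    refine Integrable.mono (hint.const_mul L) (hh_meas S) ?_
    filter_upwards with ω
    rw [Real.norm_eq_abs, Real.norm_eq_abs, abs_of_nonneg (hh_nonneg S ω),
      abs_of_nonneg (mul_nonneg hL0 (hψ ω))]
    exact hh_le S ω
  -- Step 3: convergence of integrals
  have hH : Tendsto (fun S : ℝ => ∫ ω, h S ω ∂P) atTop (nhds (K * ∫ ω, ψ ω ∂P)) := by
    have := MeasureTheory.tendsto_integral_filter_of_dominated_convergence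
      (μ := P) (F := h) (f := fun ω => K * ψ ω) (l := atTop)
      (bound := fun ω => L * ψ ω)
      (Filter.Eventually.of_forall hh_meas)
      (Filter.Eventually.of_forall (fun S => Filter.Eventually.of_forall (fun ω => by
        rw [Real.norm_eq_abs, abs_of_nonneg (hh_nonneg S ω)]; exact hh_le S ω)))
      (hint.const_mul L)
      (Filter.Eventually.of_forall (fun ω => ?_))
    · rwa [integral_const_mul] at this
    · -- pointwise convergence
      have h0 : Tendsto (fun S : ℝ => u * ψ ω / Real.sqrt S) atTop (nhds 0) :=
        Tendsto.div_atTop tendsto_const_nhds (tendsto_atTop_atTop.2 (fun b =>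
          ⟨(max b 0) ^ 2, fun a ha => le_trans (le_max_left b 0)
            (by rw [← Real.sqrt_sq (le_max_right b 0)]
                exact Real.sqrt_le_sqrt ha)⟩))
      have h1 : Tendsto (fun S : ℝ => K * (ψ ω * rexp (u * ψ ω / Real.sqrt S))) atTop
          (nhds (K * (ψ ω * 1))) := by
        refine Tendsto.const_mul _ (Tendsto.const_mul _ ?_)
        have := (Real.continuous_exp.tendsto 0).comp h0
        simpa [Function.comp_def] using this
      have h2 : Tendsto (fun S : ℝ => h S ω) atTop (nhds (min (K * (ψ ω * 1)) (L * ψ ω))) :=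
        h1.min tendsto_const_nhds
      have h3 : min (K * (ψ ω * 1)) (L * ψ ω) = K * ψ ω := by
        rw [mul_one]
        exact min_eq_left (mul_le_mul_of_nonneg_right hKL (hψ ω))
      rwa [h3] at h2
  -- Step 4: eventual bound
  have hev : ∀ᶠ S in atTop, Real.sqrt S * ((∫ ω, TPR S ω ∂P) - α) ≤ ∫ ω, h S ω ∂P := by
    filter_upwards [eventually_ge_atTop (1:ℝ)] with S hS1
    have hS0 : (0:ℝ) < S := by linarith
    have hsqrt : (0:ℝ) < Real.sqrt S := Real.sqrt_pos.2 hS0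
    have hpt : ∀ ω, TPR S ω - α ≤ h S ω / Real.sqrt S := by
      intro ω
      have ht : 0 ≤ ψ ω / Real.sqrt S := div_nonneg (hψ ω) hsqrt.le
      have hb := hbound S hS0 ω
      have hfd := folded_diff_le hu ht
      have heq : min (K * (ψ ω / Real.sqrt S * rexp (u * (ψ ω / Real.sqrt S))))
          (L * (ψ ω / Real.sqrt S)) = h S ω / Real.sqrt S := by
        rw [hhdef]
        rw [show K * (ψ ω / Real.sqrt S * rexp (u * (ψ ω / Real.sqrt S)))
            = K * (ψ ω * rexp (u * ψ ω / Real.sqrt S)) / Real.sqrt S by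
          rw [mul_div_assoc u (ψ ω) (Real.sqrt S)]; ring,
          show L * (ψ ω / Real.sqrt S) = L * ψ ω / Real.sqrt S by ring]
        exact min_div_div_right hsqrt.le _ _ |>.symm ▸ rfl
      calc TPR S ω - α ≤ (1 - foldedStdGaussianCDF (u - ψ ω / Real.sqrt S)) -
            (1 - foldedStdGaussianCDF u) := by rw [hα]; linarith [hb]
        _ = foldedStdGaussianCDF u - foldedStdGaussianCDF (u - ψ ω / Real.sqrt S) := by ring
        _ ≤ min (K * (ψ ω / Real.sqrt S * rexp (u * (ψ ω / Real.sqrt S))))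
            (L * (ψ ω / Real.sqrt S)) := hfd
        _ = h S ω / Real.sqrt S := heq
    have hint1 : Integrable (fun ω => TPR S ω - α) P := (hTPRint S).sub (integrable_const α)
    have hint2 : Integrable (fun ω => h S ω / Real.sqrt S) P := (hh_int S).div_const _
    have hmono := integral_mono hint1 hint2 hpt
    rw [integral_sub (hTPRint S) (integrable_const α), integral_const,
      probReal_univ, one_smul, integral_div] at hmono
    calc Real.sqrt S * ((∫ ω, TPR S ω ∂P) - α)
        ≤ Real.sqrt S * ((∫ ω, h S ω ∂P) / Real.sqrt S) :=
          mul_le_mul_of_nonneg_left hmono hsqrt.le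
      _ = ∫ ω, h S ω ∂P := by field_simp
  -- Step 5
  set g : ℝ → ℝ := fun S => Real.sqrt S * ((∫ ω, TPR S ω ∂P) - α) with hgdef
  by_cases hcb : IsCoboundedUnder (· ≤ ·) atTop g
  · have hbd : IsBoundedUnder (· ≤ ·) atTop (fun S => ∫ ω, h S ω ∂P) :=
      hH.isBoundedUnder_le
    calc limsup g atTop ≤ limsup (fun S => ∫ ω, h S ω ∂P) atTop :=
          Filter.limsup_le_limsup hev hcb hbd
      _ = K * ∫ ω, ψ ω ∂P := hH.limsup_eq
  · have hSinf : limsup g atTop = sInf {a | ∀ᶠ S in atTop, g S ≤ a} := Filter.limsup_eq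
    have hnb : ¬ BddBelow {a | ∀ᶠ S in atTop, g S ≤ a} := by
      intro ⟨b, hb⟩
      exact hcb ⟨b, fun a ha => hb (by simpa [eventually_map] using ha)⟩
    rw [hSinf, Real.sInf_of_not_bddBelow hnb]
    exact mul_nonneg hK0 (integral_nonneg hψ)
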